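/- If a digraph G is a proper circular-arc catch digraph, then its augmented adjacency matrix can be brought by independent row and column permutations to a matrix B satisfying: (1) B has the circular ones property along both rows and columns; (2) for any two rows r, s of B, the set difference of the circular intervals of ones of r and s is again a circular interval (equivalently, no row's circular stretch of ones is properly contained in another's when both are nontrivial); and (3) for any full row r and any two nontrivial rows s, t, the set r − s − t is a circular interval. -/

import Mathlib

/-- Membership in the closed clockwise circular arc starting at `a` of length `ℓ`
on a circle of circumference 1 (points are reals modulo 1). -/
def arcMem (a ℓ x : ℝ) : Prop := Int.fract (x - a) ≤ ℓ

/-- The set of points of the circle (reals, modulo 1) lying on the arc. -/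
def arcSet (a ℓ : ℝ) : Set ℝ := {x | arcMem a ℓ x}

/-- `E` is a circular-arc catch digraph: each vertex `v` carries a circular arc
(start `a v`, length `ℓ v`) and a point `p v` inside its own arc, and
`E u v` iff `u ≠ v` and the point of `v` lies in the arc of `u`. -/
def IsCACatchDigraph {V : Type*} (E : V → V → Prop) : Prop :=
  ∃ a ℓ p : V → ℝ, (∀ v, arcMem (a v) (ℓ v) (p v)) ∧
    ∀ u v, E u v ↔ u ≠ v ∧ arcMem (a u) (ℓ u) (p v)

/-- Proper circular-arc catch digraph: as above, with no arc properly contained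
in another. -/
def IsProperCACatchDigraph {V : Type*} (E : V → V → Prop) : Prop :=
  ∃ a ℓ p : V → ℝ, (∀ v, arcMem (a v) (ℓ v) (p v)) ∧
    (∀ u v : V, ¬ arcSet (a u) (ℓ u) ⊂ arcSet (a v) (ℓ v)) ∧
    ∀ u v, E u v ↔ u ≠ v ∧ arcMem (a u) (ℓ u) (p v)

/-- A digraph is oriented: no pair of vertices has edges in both directions. -/
def Oriented {V : Type*} (E : V → V → Prop) : Prop := ∀ u v, E u v → ¬ E v u

/-- A subset of `Fin n` is a circular (cyclically consecutive) block. -/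
def CircBlock {n : ℕ} (S : Set (Fin n)) : Prop :=
  S = ∅ ∨ ∃ a b : Fin n, S = {i | i - a ≤ b - a}


/-- The augmented adjacency matrix of a digraph, with rows and columns
independently permuted. -/
def AugM {V : Type*} {n : ℕ} (E : V → V → Prop) (ρ γ : Fin n ≃ V)
    (i j : Fin n) : Prop :=
  E (ρ i) (γ j) ∨ ρ i = γ j

/-- The three matrix conditions: circular ones along rows and columns; the
difference of the one-blocks of any two rows is a circular interval; and for
any full row r and nontrivial rows s, t the set r - s - t is a circular
interval. -/
def MatCond {n : ℕ} (B : Fin n → Fin n → Prop) : Prop :=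
  (∀ i, CircBlock {j | B i j}) ∧
  (∀ j, CircBlock {i | B i j}) ∧
  (∀ r s, CircBlock {j | B r j ∧ ¬ B s j}) ∧
  (∀ r s t, (∀ j, B r j) →
     (∃ j, B s j) → (∃ j, ¬ B s j) → (∃ j, B t j) → (∃ j, ¬ B t j) →
     CircBlock {j | B r j ∧ ¬ B s j ∧ ¬ B t j})

namespace Stmt13

/-! ### fractional part toolkit -/

lemma fr_mem (x : ℝ) : Int.fract x ∈ Set.Ico (0:ℝ) 1 :=
  ⟨Int.fract_nonneg x, Int.fract_lt_one x⟩

lemma fract_sub_fract (a b : ℝ) :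
    Int.fract (Int.fract a - Int.fract b) = Int.fract (a - b) := by
  have h : Int.fract a - Int.fract b = (a - b) - ((⌊a⌋ - ⌊b⌋ : ℤ) : ℝ) := by
    unfold Int.fract; push_cast; ring
  rw [h, Int.fract_sub_intCast]

lemma fract_add_fract (a b : ℝ) :
    Int.fract (Int.fract a + Int.fract b) = Int.fract (a + b) := by
  have h : Int.fract a + Int.fract b = (a + b) - ((⌊a⌋ + ⌊b⌋ : ℤ) : ℝ) := by
    unfold Int.fract; push_cast; ring
  rw [h, Int.fract_sub_intCast]

lemma fract_coord (c x y : ℝ) :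
    Int.fract (Int.fract (x - c) - Int.fract (y - c)) = Int.fract (x - y) := by
  rw [fract_sub_fract]; congr 1; ring

lemma fract_sub_Ico {x y : ℝ} (hx : x ∈ Set.Ico (0:ℝ) 1) (hy : y ∈ Set.Ico (0:ℝ) 1) :
    Int.fract (y - x) = if x ≤ y then y - x else y - x + 1 := by
  obtain ⟨hx0, hx1⟩ := hx; obtain ⟨hy0, hy1⟩ := hy
  split_ifs with h
  · exact Int.fract_eq_self.mpr ⟨by linarith, by linarith⟩
  · push_neg at h
    have h2 : Int.fract (y - x + 1) = Int.fract (y - x) := by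
      have := Int.fract_add_intCast (y - x) 1; push_cast at this; exact this
    rw [← h2]; exact Int.fract_eq_self.mpr ⟨by linarith, by linarith⟩

lemma same_point {x y c c' : ℝ} (h : Int.fract (x - c) = Int.fract (y - c)) :
    Int.fract (x - c') = Int.fract (y - c') := by
  obtain ⟨z, hz⟩ := Int.fract_eq_fract.mp h
  have hz' : (x - c) - (y - c) = (z : ℝ) := hz
  have hxy : x - c' = (y - c') + (z : ℝ) := by linarith
  rw [hxy, Int.fract_add_intCast]

lemma fract_le_self_of_nonneg {s : ℝ} (hs : 0 ≤ s) : Int.fract s ≤ s := by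
  have h : (0:ℝ) ≤ (⌊s⌋ : ℝ) := by exact_mod_cast Int.floor_nonneg.mpr hs
  unfold Int.fract; linarith

/-! ### arc lemmas -/

lemma arc_subset {a ℓ a' ℓ' : ℝ} (h : Int.fract (a - a') + ℓ ≤ ℓ') :
    arcSet a ℓ ⊆ arcSet a' ℓ' := by
  intro y hy
  have hy' : Int.fract (y - a) ≤ ℓ := hy
  have hkey : Int.fract (y - a') = Int.fract (Int.fract (y - a) + Int.fract (a - a')) := by
    rw [fract_add_fract]; congr 1; ring
  have h0 : 0 ≤ Int.fract (y - a) + Int.fract (a - a') :=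
    add_nonneg (Int.fract_nonneg _) (Int.fract_nonneg _)
  have h1 := fract_le_self_of_nonneg h0
  show Int.fract (y - a') ≤ ℓ'
  rw [hkey]; linarith

lemma arc_btw {a ℓ x y : ℝ} (hx : arcMem a ℓ x) (hy : arcMem a ℓ y) :
    (∀ z, Int.fract (z - x) ≤ Int.fract (y - x) → arcMem a ℓ z) ∨
    (∀ z, Int.fract (z - y) ≤ Int.fract (x - y) → arcMem a ℓ z) := by
  by_cases hl : 1 ≤ ℓ
  · exact Or.inl (fun z _ => le_trans (le_of_lt (Int.fract_lt_one _)) hl)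
  push_neg at hl
  have key : ∀ u v : ℝ, arcMem a ℓ u → arcMem a ℓ v →
      Int.fract (u - a) ≤ Int.fract (v - a) →
      ∀ z, Int.fract (z - u) ≤ Int.fract (v - u) → arcMem a ℓ z := by
    intro u v hu hv huv z hz
    have hu' : Int.fract (u - a) ≤ ℓ := hu
    have hv' : Int.fract (v - a) ≤ ℓ := hv
    have hs0 := Int.fract_nonneg (u - a)
    have ht1 := Int.fract_lt_one (v - a)
    have hvu : Int.fract (v - u) = Int.fract (v - a) - Int.fract (u - a) := by
      rw [← fract_coord a v u]
      exact Int.fract_eq_self.mpr ⟨by linarith, by linarith⟩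
    rw [hvu] at hz
    have hz0 := Int.fract_nonneg (z - u)
    have hmem : Int.fract (z - a) = Int.fract (z - u) + Int.fract (u - a) := by
      have h1 : Int.fract (Int.fract (z - u) + Int.fract (u - a)) = Int.fract (z - a) := by
        rw [fract_add_fract]; congr 1; ring
      rw [← h1]
      exact Int.fract_eq_self.mpr ⟨by linarith, by linarith⟩
    show Int.fract (z - a) ≤ ℓ
    rw [hmem]; linarith
  rcases le_total (Int.fract (x - a)) (Int.fract (y - a)) with hc | hc
  · exact Or.inl (key x y hx hy hc)
  · exact Or.inr (key y x hy hx hc)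

/-! ### pure arithmetic alternation lemmas -/

lemma noAlt_mem {t1 t2 t3 t4 L : ℝ}
    (h1 : t1 ∈ Set.Ico (0:ℝ) 1) (h2 : t2 ∈ Set.Ico (0:ℝ) 1)
    (h3 : t3 ∈ Set.Ico (0:ℝ) 1) (h4 : t4 ∈ Set.Ico (0:ℝ) 1)
    (c1 : Int.fract (t2 - t1) ≤ Int.fract (t3 - t1))
    (c2 : Int.fract (t3 - t1) ≤ Int.fract (t4 - t1))
    (m1 : t1 ≤ L) (m2 : L < t2) (m3 : t3 ≤ L) (m4 : L < t4) : False := by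
  rw [fract_sub_Ico h1 h2, fract_sub_Ico h1 h3] at c1
  rw [fract_sub_Ico h1 h3, fract_sub_Ico h1 h4] at c2
  obtain ⟨g1, g1'⟩ := h1; obtain ⟨g2, g2'⟩ := h2
  obtain ⟨g3, g3'⟩ := h3; obtain ⟨g4, g4'⟩ := h4
  split_ifs at c1 c2 <;> linarith

lemma noAlt_mem' {t1 t2 t3 t4 L : ℝ}
    (h1 : t1 ∈ Set.Ico (0:ℝ) 1) (h2 : t2 ∈ Set.Ico (0:ℝ) 1)
    (h3 : t3 ∈ Set.Ico (0:ℝ) 1) (h4 : t4 ∈ Set.Ico (0:ℝ) 1)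
    (c1 : Int.fract (t2 - t1) ≤ Int.fract (t3 - t1))
    (c2 : Int.fract (t3 - t1) ≤ Int.fract (t4 - t1))
    (m1 : L < t1) (m2 : t2 ≤ L) (m3 : L < t3) (m4 : t4 ≤ L) : False := by
  rw [fract_sub_Ico h1 h2, fract_sub_Ico h1 h3] at c1
  rw [fract_sub_Ico h1 h3, fract_sub_Ico h1 h4] at c2
  obtain ⟨g1, g1'⟩ := h1; obtain ⟨g2, g2'⟩ := h2
  obtain ⟨g3, g3'⟩ := h3; obtain ⟨g4, g4'⟩ := h4
  split_ifs at c1 c2 <;> linarith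

lemma noAlt_sides {u1 u2 u3 u4 : ℝ}
    (h1 : u1 ∈ Set.Ico (0:ℝ) 1) (h2 : u2 ∈ Set.Ico (0:ℝ) 1)
    (h3 : u3 ∈ Set.Ico (0:ℝ) 1) (h4 : u4 ∈ Set.Ico (0:ℝ) 1)
    (c1 : Int.fract (u2 - u1) ≤ Int.fract (u3 - u1))
    (c2 : Int.fract (u3 - u1) ≤ Int.fract (u4 - u1))
    (s2 : (u1 < u2 ∧ u3 < u2) ∨ (u2 < u1 ∧ u2 < u3))
    (s4 : (u1 < u4 ∧ u3 < u4) ∨ (u4 < u1 ∧ u4 < u3)) : False := by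
  rw [fract_sub_Ico h1 h2, fract_sub_Ico h1 h3] at c1
  rw [fract_sub_Ico h1 h3, fract_sub_Ico h1 h4] at c2
  obtain ⟨g1, g1'⟩ := h1; obtain ⟨g2, g2'⟩ := h2
  obtain ⟨g3, g3'⟩ := h3; obtain ⟨g4, g4'⟩ := h4
  rcases s2 with ⟨a1, a2⟩ | ⟨a1, a2⟩ <;> rcases s4 with ⟨b1', b2'⟩ | ⟨b1', b2'⟩ <;>
    split_ifs at c1 c2 <;> linarith

lemma cond2_arith {c1 c2 c3 c4 : ℝ}
    (h1 : c1 ∈ Set.Ico (0:ℝ) 1) (h2 : c2 ∈ Set.Ico (0:ℝ) 1)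
    (h3 : c3 ∈ Set.Ico (0:ℝ) 1) (h4 : c4 ∈ Set.Ico (0:ℝ) 1)
    (ch1 : Int.fract (c2 - c1) ≤ Int.fract (c3 - c1))
    (ch2 : Int.fract (c3 - c1) ≤ Int.fract (c4 - c1))
    (hc2 : 0 < c2) (hc4 : 0 < c4)
    (n12 : ¬(0 < c1 ∧ c1 ≤ c2)) (n14 : ¬(0 < c1 ∧ c1 ≤ c4))
    (n32 : ¬(0 < c3 ∧ c3 ≤ c2)) (n34 : ¬(0 < c3 ∧ c3 ≤ c4)) : False := by
  rw [fract_sub_Ico h1 h2, fract_sub_Ico h1 h3] at ch1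
  rw [fract_sub_Ico h1 h3, fract_sub_Ico h1 h4] at ch2
  obtain ⟨g1, g1'⟩ := h1; obtain ⟨g2, g2'⟩ := h2
  obtain ⟨g3, g3'⟩ := h3; obtain ⟨g4, g4'⟩ := h4
  push_neg at n12 n14 n32 n34
  rcases eq_or_lt_of_le g1 with e1 | e1
  · rcases eq_or_lt_of_le g3 with e3 | e3
    · split_ifs at ch1 ch2 <;> linarith
    · have k1 := n32 e3; have k2 := n34 e3
      split_ifs at ch1 ch2 <;> linarith
  · have k3 := n12 e1; have k4 := n14 e1
    rcases eq_or_lt_of_le g3 with e3 | e3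
    · split_ifs at ch1 ch2 <;> linarith
    · have k1 := n32 e3; have k2 := n34 e3
      split_ifs at ch1 ch2 <;> linarith

/-! ### membership characterizations -/

lemma mem_iff_c {aa ll x : ℝ} (hll : 0 ≤ ll) :
    arcMem aa ll x ↔ (Int.fract (aa - x) = 0 ∨ 1 - Int.fract (aa - x) ≤ ll) := by
  unfold arcMem
  by_cases h0 : Int.fract (aa - x) = 0
  · have hz : Int.fract (x - aa) = 0 := by
      rw [show x - aa = -(aa - x) by ring, Int.fract_neg_eq_zero]; exact h0
    rw [hz]; simp [h0, hll]
  · have hz : Int.fract (x - aa) = 1 - Int.fract (aa - x) := by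
      rw [show x - aa = -(aa - x) by ring]; exact Int.fract_neg h0
    rw [hz]
    constructor
    · exact Or.inr
    · rintro (hc | hc)
      · exact absurd hc h0
      · exact hc

lemma cont_contra {au lu aw lw x : ℝ}
    (hprop : ¬ arcSet aw lw ⊂ arcSet au lu)
    (hlu : 0 ≤ lu) (hlw : 0 ≤ lw)
    (hu : arcMem au lu x) (hw : ¬ arcMem aw lw x)
    (hcu : 0 < Int.fract (au - x)) (hcw : Int.fract (au - x) ≤ Int.fract (aw - x)) : False := by
  rw [mem_iff_c hlw] at hw
  push_neg at hw
  obtain ⟨hw1, hw2⟩ := hw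
  have hu2 : 1 - Int.fract (au - x) ≤ lu := by
    rcases (mem_iff_c hlu).mp hu with h | h
    · exact absurd h (ne_of_gt hcu)
    · exact h
  have hfr : Int.fract (aw - au) = Int.fract (aw - x) - Int.fract (au - x) := by
    rw [← fract_coord x aw au]
    exact Int.fract_eq_self.mpr ⟨by linarith, by linarith [Int.fract_lt_one (aw - x)]⟩
  have hsub : arcSet aw lw ⊆ arcSet au lu := arc_subset (by rw [hfr]; linarith)
  apply hprop
  refine Set.ssubset_iff_subset_ne.mpr ⟨hsub, fun hEq => ?_⟩
  have hxw : x ∈ arcSet aw lw := by rw [hEq]; exact hu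
  have hlast : 1 - Int.fract (aw - x) ≤ lw := by
    rcases (mem_iff_c hlw).mp hxw with h | h
    · exact absurd h hw1
    · exact h
  linarith

lemma arcSet_eq {a1 l1 a2 l2 : ℝ}
    (hns : ¬ arcSet a1 l1 ⊂ arcSet a2 l2) (hns' : ¬ arcSet a2 l2 ⊂ arcSet a1 l1)
    (hf : Int.fract a1 = Int.fract a2) : arcSet a1 l1 = arcSet a2 l2 := by
  have hd12 : Int.fract (a1 - a2) = 0 := by
    rw [← fract_sub_fract, hf, sub_self, Int.fract_zero]
  have hd21 : Int.fract (a2 - a1) = 0 := by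
    rw [← fract_sub_fract, hf, sub_self, Int.fract_zero]
  rcases le_total l1 l2 with hl | hl
  · have hsub : arcSet a1 l1 ⊆ arcSet a2 l2 := arc_subset (by rw [hd12]; linarith)
    by_contra hne
    exact hns (Set.ssubset_iff_subset_ne.mpr ⟨hsub, hne⟩)
  · have hsub : arcSet a2 l2 ⊆ arcSet a1 l1 := arc_subset (by rw [hd21]; linarith)
    by_contra hne
    exact hns' (Set.ssubset_iff_subset_ne.mpr ⟨hsub, Ne.symm hne⟩)

/-! ### Fin circular machinery -/

def cyc4 {n : ℕ} (i j k l : Fin n) : Prop :=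
  0 < ((j - i : Fin n) : ℕ) ∧ ((j - i : Fin n) : ℕ) < ((k - i : Fin n) : ℕ) ∧
    ((k - i : Fin n) : ℕ) < ((l - i : Fin n) : ℕ)

lemma finsub_val {n : ℕ} (i j : Fin n) :
    ((j - i : Fin n) : ℕ) = if i.val ≤ j.val then j.val - i.val else j.val + n - i.val := by
  have hi := i.isLt; have hj := j.isLt
  rw [Fin.sub_def]
  show ((n - i.val) + j.val) % n = _
  split_ifs with h
  · have e : (n - i.val) + j.val = (j.val - i.val) + n := by omega
    rw [e, Nat.add_mod_right, Nat.mod_eq_of_lt (by omega)]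
  · rw [Nat.mod_eq_of_lt (by omega)]; omega

lemma fin_sub_val_inj {n : ℕ} {x y z : Fin n}
    (h : ((x - z : Fin n) : ℕ) = ((y - z : Fin n) : ℕ)) : x = y := by
  have h1 := finsub_val z x
  have h2 := finsub_val z y
  have hx := x.isLt; have hy := y.isLt; have hz := z.isLt
  rw [h, h2] at h1
  split_ifs at h1 <;> exact Fin.ext (by omega)

lemma circBlock_of_noAlt {n : ℕ} (S : Set (Fin n))
    (h : ∀ i j k l : Fin n, cyc4 i j k l → i ∈ S → j ∉ S → k ∈ S → l ∉ S → False) :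
    CircBlock S := by
  classical
  rcases eq_or_ne S ∅ with hS | hS
  · exact Or.inl hS
  obtain ⟨x0, hx0⟩ := Set.nonempty_iff_ne_empty.mpr hS
  have hn : 0 < n := x0.pos
  haveI : NeZero n := ⟨by omega⟩
  rcases eq_or_ne S Set.univ with hU | hU
  · right
    refine ⟨0, ⟨n - 1, by omega⟩, ?_⟩
    rw [hU]; ext x
    simp only [Set.mem_univ, true_iff, Set.mem_setOf_eq, sub_zero, Fin.le_def]
    have := x.isLt
    omega
  obtain ⟨z, hz⟩ : ∃ z, z ∉ S := by
    by_contra hc; push_neg at hc; exact hU (Set.eq_univ_of_forall hc)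
  set F : Finset (Fin n) := Finset.univ.filter (· ∈ S) with hF
  have hFne : F.Nonempty := ⟨x0, by simp [hF, hx0]⟩
  obtain ⟨A, hAF, hmin⟩ := F.exists_min_image (fun x => ((x - z : Fin n) : ℕ)) hFne
  obtain ⟨B, hBF, hmax⟩ := F.exists_max_image (fun x => ((x - z : Fin n) : ℕ)) hFne
  have hAS : A ∈ S := by simpa [hF] using hAF
  have hBS : B ∈ S := by simpa [hF] using hBF
  have hmin' : ∀ x ∈ S, ((A - z : Fin n) : ℕ) ≤ ((x - z : Fin n) : ℕ) :=
    fun x hx => hmin x (by simp [hF, hx])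
  have hmax' : ∀ x ∈ S, ((x - z : Fin n) : ℕ) ≤ ((B - z : Fin n) : ℕ) :=
    fun x hx => hmax x (by simp [hF, hx])
  right
  refine ⟨A, B, ?_⟩
  have hda : 0 < ((A - z : Fin n) : ℕ) := by
    rcases Nat.eq_zero_or_pos ((A - z : Fin n) : ℕ) with h0 | hpos
    · exfalso
      have hAz : A = z := by
        have h1 := finsub_val z A
        rw [h0] at h1
        have hA := A.isLt; have hz' := z.isLt
        split_ifs at h1 <;> [exact Fin.ext (by omega); omega]
      exact hz (hAz ▸ hAS)
    · exact hpos
  have hdadb : ((A - z : Fin n) : ℕ) ≤ ((B - z : Fin n) : ℕ) := hmax' A hAS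
  have hdbn : ((B - z : Fin n) : ℕ) < n := (B - z).isLt
  have hdan : ((A - z : Fin n) : ℕ) < n := (A - z).isLt
  have hBA : ((B - A : Fin n) : ℕ) = ((B - z : Fin n) : ℕ) - ((A - z : Fin n) : ℕ) := by
    rw [show B - A = (B - z) - (A - z) by abel, finsub_val, if_pos hdadb]
  have hzA : ((z - A : Fin n) : ℕ) = n - ((A - z : Fin n) : ℕ) := by
    rw [show z - A = 0 - (A - z) by abel, finsub_val]
    simp only [Fin.val_zero]
    simp only [show ¬ ((A - z : Fin n) : ℕ) ≤ 0 by omega, ↓reduceIte]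
    omega
  ext x
  have hxA : ((x - A : Fin n) : ℕ) =
      if ((A - z : Fin n) : ℕ) ≤ ((x - z : Fin n) : ℕ)
      then ((x - z : Fin n) : ℕ) - ((A - z : Fin n) : ℕ)
      else ((x - z : Fin n) : ℕ) + n - ((A - z : Fin n) : ℕ) := by
    rw [show x - A = (x - z) - (A - z) by abel, finsub_val]
  have hdxn : ((x - z : Fin n) : ℕ) < n := (x - z).isLt
  simp only [Set.mem_setOf_eq]
  constructor
  · intro hxS
    have l1 := hmin' x hxS
    have l2 := hmax' x hxS
    rw [Fin.le_def, hxA, hBA, if_pos l1]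
    omega
  · intro hle
    by_contra hxS
    rw [Fin.le_def, hxA, hBA] at hle
    have hdx : ((A - z : Fin n) : ℕ) ≤ ((x - z : Fin n) : ℕ) ∧
        ((x - z : Fin n) : ℕ) ≤ ((B - z : Fin n) : ℕ) := by
      split_ifs at hle with hc
      · exact ⟨hc, by omega⟩
      · omega
    have hxnA : x ≠ A := fun hEq => hxS (hEq ▸ hAS)
    have hxnB : x ≠ B := fun hEq => hxS (hEq ▸ hBS)
    have hdxa : ((x - z : Fin n) : ℕ) ≠ ((A - z : Fin n) : ℕ) :=
      fun hEq => hxnA (fin_sub_val_inj hEq)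
    have hdxb : ((x - z : Fin n) : ℕ) ≠ ((B - z : Fin n) : ℕ) :=
      fun hEq => hxnB (fin_sub_val_inj hEq)
    apply h A x B z _ hAS hxS hBS hz
    refine ⟨?_, ?_, ?_⟩
    · rw [hxA, if_pos hdx.1]; omega
    · rw [hxA, hBA, if_pos hdx.1]; omega
    · rw [hBA, hzA]; omega

lemma bridge {n : ℕ} {q : Fin n → ℝ} (hq : Monotone q)
    (hq01 : ∀ m, q m ∈ Set.Ico (0:ℝ) 1)
    {i j k l : Fin n} (hc : cyc4 i j k l) :
    q l = q i ∨ (Int.fract (q j - q i) ≤ Int.fract (q k - q i) ∧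
      Int.fract (q k - q i) ≤ Int.fract (q l - q i)) := by
  by_cases hql : q l = q i
  · exact Or.inl hql
  right
  obtain ⟨hc1, hc2, hc3⟩ := hc
  rw [finsub_val i j] at hc1 hc2
  rw [finsub_val i k] at hc2 hc3
  rw [finsub_val i l] at hc3
  have hi := i.isLt; have hjn := j.isLt; have hkn := k.isLt; have hln := l.isLt
  have mono : ∀ u v : Fin n, u.val ≤ v.val → q u ≤ q v := fun u v huv => hq huv
  obtain ⟨qi0, qi1⟩ := hq01 i; obtain ⟨qj0, qj1⟩ := hq01 j
  obtain ⟨qk0, qk1⟩ := hq01 k; obtain ⟨ql0, ql1⟩ := hq01 l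
  rw [fract_sub_Ico (hq01 i) (hq01 j), fract_sub_Ico (hq01 i) (hq01 k),
    fract_sub_Ico (hq01 i) (hq01 l)]
  by_cases h1 : i.val ≤ j.val <;> by_cases h2 : i.val ≤ k.val <;>
    by_cases h3 : i.val ≤ l.val <;>
    simp only [h1, h2, h3, if_true, if_false, if_pos, if_neg, not_true,
      not_false_iff] at hc1 hc2 hc3 <;>
    first
    | omega
    | (first
       | (have f1 : q i ≤ q j := mono _ _ h1
          have f2 : q j ≤ q k := mono _ _ (by omega)
          have f3 : q k ≤ q l := mono _ _ (by omega)
          split_ifs <;> constructor <;> linarith)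
       | (have f1 : q i ≤ q j := mono _ _ h1
          have f2 : q j ≤ q k := mono _ _ (by omega)
          have f3 : q l ≤ q i := mono _ _ (by omega)
          have f4 : q l < q i := lt_of_le_of_ne f3 hql
          split_ifs <;> constructor <;> linarith)
       | (have f1 : q i ≤ q j := mono _ _ h1
          have f2 : q k ≤ q l := mono _ _ (by omega)
          have f3 : q l ≤ q i := mono _ _ (by omega)
          have f4 : q l < q i := lt_of_le_of_ne f3 hql
          split_ifs <;> constructor <;> linarith)
       | (have f1 : q j ≤ q k := mono _ _ (by omega)
          have f2 : q k ≤ q l := mono _ _ (by omega)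
          have f3 : q l ≤ q i := mono _ _ (by omega)
          have f4 : q l < q i := lt_of_le_of_ne f3 hql
          split_ifs <;> constructor <;> linarith))

lemma circBlock_master {n : ℕ} {q : Fin n → ℝ} (hq : Monotone q)
    (hq01 : ∀ m, q m ∈ Set.Ico (0:ℝ) 1) (P : ℝ → Prop)
    (hP : ∀ w x y z : Fin n,
        Int.fract (q x - q w) ≤ Int.fract (q y - q w) →
        Int.fract (q y - q w) ≤ Int.fract (q z - q w) →
        P (q w) → ¬ P (q x) → P (q y) → ¬ P (q z) → False) :
    CircBlock {m | P (q m)} := by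
  apply circBlock_of_noAlt
  intro i j k l hc h1 h2 h3 h4
  rcases bridge hq hq01 hc with heq | ⟨c1, c2⟩
  · refine h4 ?_
    simp only [Set.mem_setOf_eq] at h1 ⊢
    rw [heq]; exact h1
  · exact hP i j k l c1 c2 h1 h2 h3 h4

/-! ### arc versions of the alternation lemmas -/

lemma noAlt_arc {aR lR t1 t2 t3 t4 : ℝ}
    (c1 : Int.fract (t2 - t1) ≤ Int.fract (t3 - t1))
    (c2 : Int.fract (t3 - t1) ≤ Int.fract (t4 - t1))
    (m1 : arcMem aR lR t1) (m2 : ¬ arcMem aR lR t2)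
    (m3 : arcMem aR lR t3) (m4 : ¬ arcMem aR lR t4) : False := by
  have c1' : Int.fract (Int.fract (t2 - aR) - Int.fract (t1 - aR)) ≤
      Int.fract (Int.fract (t3 - aR) - Int.fract (t1 - aR)) := by
    rw [fract_coord, fract_coord]; exact c1
  have c2' : Int.fract (Int.fract (t3 - aR) - Int.fract (t1 - aR)) ≤
      Int.fract (Int.fract (t4 - aR) - Int.fract (t1 - aR)) := by
    rw [fract_coord, fract_coord]; exact c2
  exact noAlt_mem (fr_mem (t1 - aR)) (fr_mem (t2 - aR)) (fr_mem (t3 - aR)) (fr_mem (t4 - aR))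
    c1' c2' m1 (not_le.mp m2) m3 (not_le.mp m4)

lemma noAlt_arc' {aS lS t1 t2 t3 t4 : ℝ}
    (c1 : Int.fract (t2 - t1) ≤ Int.fract (t3 - t1))
    (c2 : Int.fract (t3 - t1) ≤ Int.fract (t4 - t1))
    (m1 : ¬ arcMem aS lS t1) (m2 : arcMem aS lS t2)
    (m3 : ¬ arcMem aS lS t3) (m4 : arcMem aS lS t4) : False := by
  have c1' : Int.fract (Int.fract (t2 - aS) - Int.fract (t1 - aS)) ≤
      Int.fract (Int.fract (t3 - aS) - Int.fract (t1 - aS)) := by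
    rw [fract_coord, fract_coord]; exact c1
  have c2' : Int.fract (Int.fract (t3 - aS) - Int.fract (t1 - aS)) ≤
      Int.fract (Int.fract (t4 - aS) - Int.fract (t1 - aS)) := by
    rw [fract_coord, fract_coord]; exact c2
  exact noAlt_mem' (fr_mem (t1 - aS)) (fr_mem (t2 - aS)) (fr_mem (t3 - aS)) (fr_mem (t4 - aS))
    c1' c2' (not_le.mp m1) m2 (not_le.mp m3) m4

/-- cond 3, mixed case 1: t2 outside the r-arc, t4 in both arcs. -/
lemma mixed1 {aR lR aS lS t1 t2 t3 t4 : ℝ}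
    (b1 : t1 ∈ Set.Ico (0:ℝ) 1) (b2 : t2 ∈ Set.Ico (0:ℝ) 1)
    (b3 : t3 ∈ Set.Ico (0:ℝ) 1) (b4 : t4 ∈ Set.Ico (0:ℝ) 1)
    (c1 : Int.fract (t2 - t1) ≤ Int.fract (t3 - t1))
    (c2 : Int.fract (t3 - t1) ≤ Int.fract (t4 - t1))
    (m1A : arcMem aR lR t1) (m1S : ¬ arcMem aS lS t1)
    (m2A : ¬ arcMem aR lR t2)
    (m3A : arcMem aR lR t3) (m3S : ¬ arcMem aS lS t3)
    (m4A : arcMem aR lR t4) (m4S : arcMem aS lS t4) :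
    arcSet aS lS ⊂ arcSet aR lR := by
  set u1 := Int.fract (t1 - aR) with hu1
  set u2 := Int.fract (t2 - aR) with hu2
  set u3 := Int.fract (t3 - aR) with hu3
  set u4 := Int.fract (t4 - aR) with hu4
  have e1 : u1 ∈ Set.Ico (0:ℝ) 1 := fr_mem _
  have e2 : u2 ∈ Set.Ico (0:ℝ) 1 := fr_mem _
  have e3 : u3 ∈ Set.Ico (0:ℝ) 1 := fr_mem _
  have e4 : u4 ∈ Set.Ico (0:ℝ) 1 := fr_mem _
  have hm1 : u1 ≤ lR := m1A
  have hm2 : lR < u2 := not_le.mp m2A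
  have hm3 : u3 ≤ lR := m3A
  have hm4 : u4 ≤ lR := m4A
  have c1' : Int.fract (u2 - u1) ≤ Int.fract (u3 - u1) := by
    rw [hu1, hu2, hu3, fract_coord, fract_coord]; exact c1
  have c2' : Int.fract (u3 - u1) ≤ Int.fract (u4 - u1) := by
    rw [hu1, hu3, hu4, fract_coord, fract_coord]; exact c2
  have h12 : u1 < u2 := lt_of_le_of_lt hm1 hm2
  rw [fract_sub_Ico e1 e2, fract_sub_Ico e1 e3] at c1'
  rw [fract_sub_Ico e1 e3, fract_sub_Ico e1 e4] at c2'
  rw [if_pos (le_of_lt h12)] at c1'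
  have h31 : u3 < u1 := by
    by_contra hcon; push_neg at hcon
    rw [if_pos hcon] at c1'
    linarith
  rw [if_neg (not_le.mpr h31)] at c1' c2'
  have h41 : u4 < u1 := by
    by_contra hcon; push_neg at hcon
    rw [if_pos hcon] at c2'
    have := e3.1
    linarith [e4.2]
  rw [if_neg (not_le.mpr h41)] at c2'
  have h34 : u3 ≤ u4 := by linarith
  have hne34 : u3 ≠ u4 := by
    intro hEq
    apply m3S
    have hsp : Int.fract (t3 - aS) = Int.fract (t4 - aS) := same_point (by rw [← hu3, ← hu4]; exact hEq)
    show Int.fract (t3 - aS) ≤ lS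
    rw [hsp]; exact m4S
  have h34' : u3 < u4 := lt_of_le_of_ne h34 hne34
  refine Set.ssubset_iff_subset_ne.mpr ⟨?_, fun hEq => m1S (show t1 ∈ arcSet aS lS by rw [hEq]; exact m1A)⟩
  intro yy hyy
  show Int.fract (yy - aR) ≤ lR
  by_contra hw; push_neg at hw
  set w := Int.fract (yy - aR) with hwdef
  have ew : w ∈ Set.Ico (0:ℝ) 1 := fr_mem _
  rcases arc_btw m4S hyy with hb | hb
  · apply m1S
    apply hb t1
    have q1 : Int.fract (t1 - t4) = u1 - u4 := by
      rw [← fract_coord aR t1 t4, ← hu1, ← hu4, fract_sub_Ico e4 e1, if_pos (le_of_lt h41)]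
    have q2 : Int.fract (yy - t4) = w - u4 := by
      rw [← fract_coord aR yy t4, ← hwdef, ← hu4, fract_sub_Ico e4 ew, if_pos (by linarith)]
    rw [q1, q2]; linarith
  · apply m3S
    apply hb t3
    have q1 : Int.fract (t3 - yy) = u3 - w + 1 := by
      rw [← fract_coord aR t3 yy, ← hu3, ← hwdef, fract_sub_Ico ew e3, if_neg (not_le.mpr (by linarith))]
    have q2 : Int.fract (t4 - yy) = u4 - w + 1 := by
      rw [← fract_coord aR t4 yy, ← hu4, ← hwdef, fract_sub_Ico ew e4, if_neg (not_le.mpr (by linarith))]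
    rw [q1, q2]; linarith

/-- cond 3, mixed case 2: t2 in both arcs, t4 outside the r-arc. -/
lemma mixed2 {aR lR aS lS t1 t2 t3 t4 : ℝ}
    (b1 : t1 ∈ Set.Ico (0:ℝ) 1) (b2 : t2 ∈ Set.Ico (0:ℝ) 1)
    (b3 : t3 ∈ Set.Ico (0:ℝ) 1) (b4 : t4 ∈ Set.Ico (0:ℝ) 1)
    (c1 : Int.fract (t2 - t1) ≤ Int.fract (t3 - t1))
    (c2 : Int.fract (t3 - t1) ≤ Int.fract (t4 - t1))
    (m1A : arcMem aR lR t1) (m1S : ¬ arcMem aS lS t1)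
    (m2A : arcMem aR lR t2) (m2S : arcMem aS lS t2)
    (m3A : arcMem aR lR t3) (m3S : ¬ arcMem aS lS t3)
    (m4A : ¬ arcMem aR lR t4) :
    arcSet aS lS ⊂ arcSet aR lR := by
  set u1 := Int.fract (t1 - aR) with hu1
  set u2 := Int.fract (t2 - aR) with hu2
  set u3 := Int.fract (t3 - aR) with hu3
  set u4 := Int.fract (t4 - aR) with hu4
  have e1 : u1 ∈ Set.Ico (0:ℝ) 1 := fr_mem _
  have e2 : u2 ∈ Set.Ico (0:ℝ) 1 := fr_mem _
  have e3 : u3 ∈ Set.Ico (0:ℝ) 1 := fr_mem _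
  have e4 : u4 ∈ Set.Ico (0:ℝ) 1 := fr_mem _
  have hm1 : u1 ≤ lR := m1A
  have hm2 : u2 ≤ lR := m2A
  have hm3 : u3 ≤ lR := m3A
  have hm4 : lR < u4 := not_le.mp m4A
  have c1' : Int.fract (u2 - u1) ≤ Int.fract (u3 - u1) := by
    rw [hu1, hu2, hu3, fract_coord, fract_coord]; exact c1
  have c2' : Int.fract (u3 - u1) ≤ Int.fract (u4 - u1) := by
    rw [hu1, hu3, hu4, fract_coord, fract_coord]; exact c2
  have h14 : u1 < u4 := lt_of_le_of_lt hm1 hm4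
  rw [fract_sub_Ico e1 e2, fract_sub_Ico e1 e3] at c1'
  rw [fract_sub_Ico e1 e3, fract_sub_Ico e1 e4] at c2'
  rw [if_pos (le_of_lt h14)] at c2'
  have h31 : u1 ≤ u3 := by
    by_contra hcon; push_neg at hcon
    rw [if_neg (not_le.mpr hcon)] at c2'
    linarith [e3.1, e4.2]
  rw [if_pos h31] at c1' c2'
  have h21 : u1 ≤ u2 := by
    by_contra hcon; push_neg at hcon
    rw [if_neg (not_le.mpr hcon)] at c1'
    linarith [e2.1, e3.2]
  rw [if_pos h21] at c1'
  have h23 : u2 ≤ u3 := by linarith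
  have hne12 : u1 ≠ u2 := by
    intro hEq
    apply m1S
    have hsp : Int.fract (t1 - aS) = Int.fract (t2 - aS) := same_point (by rw [← hu1, ← hu2]; exact hEq)
    show Int.fract (t1 - aS) ≤ lS
    rw [hsp]; exact m2S
  have hne23 : u2 ≠ u3 := by
    intro hEq
    apply m3S
    have hsp : Int.fract (t3 - aS) = Int.fract (t2 - aS) := same_point (by rw [← hu3, ← hu2]; exact hEq.symm)
    show Int.fract (t3 - aS) ≤ lS
    rw [hsp]; exact m2S
  have h12' : u1 < u2 := lt_of_le_of_ne h21 hne12
  have h23' : u2 < u3 := lt_of_le_of_ne h23 hne23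
  refine Set.ssubset_iff_subset_ne.mpr ⟨?_, fun hEq => m1S (show t1 ∈ arcSet aS lS by rw [hEq]; exact m1A)⟩
  intro yy hyy
  show Int.fract (yy - aR) ≤ lR
  by_contra hw; push_neg at hw
  set w := Int.fract (yy - aR) with hwdef
  have ew : w ∈ Set.Ico (0:ℝ) 1 := fr_mem _
  rcases arc_btw m2S hyy with hb | hb
  · apply m3S
    apply hb t3
    have q1 : Int.fract (t3 - t2) = u3 - u2 := by
      rw [← fract_coord aR t3 t2, ← hu3, ← hu2, fract_sub_Ico e2 e3, if_pos h23]
    have q2 : Int.fract (yy - t2) = w - u2 := by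
      rw [← fract_coord aR yy t2, ← hwdef, ← hu2, fract_sub_Ico e2 ew, if_pos (by linarith)]
    rw [q1, q2]; linarith
  · apply m1S
    apply hb t1
    have q1 : Int.fract (t1 - yy) = u1 - w + 1 := by
      rw [← fract_coord aR t1 yy, ← hu1, ← hwdef, fract_sub_Ico ew e1, if_neg (not_le.mpr (by linarith))]
    have q2 : Int.fract (t2 - yy) = u2 - w + 1 := by
      rw [← fract_coord aR t2 yy, ← hu2, ← hwdef, fract_sub_Ico ew e2, if_neg (not_le.mpr (by linarith))]
    rw [q1, q2]; linarith

/-- cond 4, mixed case. -/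
lemma mixed4 {aR lR aS lS aT lT t1 t2 t3 t4 ws wt : ℝ}
    (b1 : t1 ∈ Set.Ico (0:ℝ) 1) (b2 : t2 ∈ Set.Ico (0:ℝ) 1)
    (b3 : t3 ∈ Set.Ico (0:ℝ) 1) (b4 : t4 ∈ Set.Ico (0:ℝ) 1)
    (c1 : Int.fract (t2 - t1) ≤ Int.fract (t3 - t1))
    (c2 : Int.fract (t3 - t1) ≤ Int.fract (t4 - t1))
    (m1R : arcMem aR lR t1) (m2R : arcMem aR lR t2)
    (m3R : arcMem aR lR t3) (m4R : arcMem aR lR t4)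
    (m1S : ¬ arcMem aS lS t1) (m3S : ¬ arcMem aS lS t3)
    (m1T : ¬ arcMem aT lT t1) (m3T : ¬ arcMem aT lT t3)
    (h2S : arcMem aS lS t2) (h4T : arcMem aT lT t4)
    (hwsS : arcMem aS lS ws) (hwsR : ¬ arcMem aR lR ws)
    (hwtT : arcMem aT lT wt) (hwtR : ¬ arcMem aR lR wt) : False := by
  set u1 := Int.fract (t1 - aR) with hu1
  set u2 := Int.fract (t2 - aR) with hu2
  set u3 := Int.fract (t3 - aR) with hu3
  set u4 := Int.fract (t4 - aR) with hu4
  set vs := Int.fract (ws - aR) with hvs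
  set vt := Int.fract (wt - aR) with hvt
  have e1 : u1 ∈ Set.Ico (0:ℝ) 1 := fr_mem _
  have e2 : u2 ∈ Set.Ico (0:ℝ) 1 := fr_mem _
  have e3 : u3 ∈ Set.Ico (0:ℝ) 1 := fr_mem _
  have e4 : u4 ∈ Set.Ico (0:ℝ) 1 := fr_mem _
  have es : vs ∈ Set.Ico (0:ℝ) 1 := fr_mem _
  have et : vt ∈ Set.Ico (0:ℝ) 1 := fr_mem _
  have hm1 : u1 ≤ lR := m1R
  have hm2 : u2 ≤ lR := m2R
  have hm3 : u3 ≤ lR := m3R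
  have hm4 : u4 ≤ lR := m4R
  have hvs' : lR < vs := not_le.mp hwsR
  have hvt' : lR < vt := not_le.mp hwtR
  have c1' : Int.fract (u2 - u1) ≤ Int.fract (u3 - u1) := by
    rw [hu1, hu2, hu3, fract_coord, fract_coord]; exact c1
  have c2' : Int.fract (u3 - u1) ≤ Int.fract (u4 - u1) := by
    rw [hu1, hu3, hu4, fract_coord, fract_coord]; exact c2
  -- side condition from arc S around t2
  have side : ∀ (aX lX w5 : ℝ) (tm um : ℝ), tm ∈ Set.Ico (0:ℝ) 1 →
      um = Int.fract (tm - aR) → um ≤ lR →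
      arcMem aX lX tm → arcMem aX lX w5 → ¬ arcMem aX lX ws → True := by
    intro _ _ _ _ _ _ _ _ _ _ _; trivial
  have mkside : ∀ (aX lX wX vX : ℝ) (t2' u2' : ℝ),
      u2' = Int.fract (t2' - aR) → u2' ≤ lR → vX = Int.fract (wX - aR) → lR < vX →
      arcMem aX lX t2' → arcMem aX lX wX →
      ¬ arcMem aX lX t1 → ¬ arcMem aX lX t3 →
      (u1 < u2' ∧ u3 < u2') ∨ (u2' < u1 ∧ u2' < u3) := by
    intro aX lX wX vX t2' u2' hu2' hm2' hvX hvX' hmem hwmem hn1 hn3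
    have eX : u2' ∈ Set.Ico (0:ℝ) 1 := by rw [hu2']; exact fr_mem _
    have evX : vX ∈ Set.Ico (0:ℝ) 1 := by rw [hvX]; exact fr_mem _
    rcases arc_btw hmem hwmem with hb | hb
    · left
      constructor
      · by_contra hcon; push_neg at hcon
        apply hn1
        apply hb t1
        have q1 : Int.fract (t1 - t2') = u1 - u2' := by
          rw [← fract_coord aR t1 t2', ← hu1, ← hu2', fract_sub_Ico eX e1, if_pos hcon]
        have q2 : Int.fract (wX - t2') = vX - u2' := by
          rw [← fract_coord aR wX t2', ← hvX, ← hu2', fract_sub_Ico eX evX, if_pos (by linarith)]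
        rw [q1, q2]; linarith
      · by_contra hcon; push_neg at hcon
        apply hn3
        apply hb t3
        have q1 : Int.fract (t3 - t2') = u3 - u2' := by
          rw [← fract_coord aR t3 t2', ← hu3, ← hu2', fract_sub_Ico eX e3, if_pos hcon]
        have q2 : Int.fract (wX - t2') = vX - u2' := by
          rw [← fract_coord aR wX t2', ← hvX, ← hu2', fract_sub_Ico eX evX, if_pos (by linarith)]
        rw [q1, q2]; linarith
    · right
      constructor
      · by_contra hcon; push_neg at hcon
        apply hn1
        apply hb t1
        have q1 : Int.fract (t1 - wX) = u1 - vX + 1 := by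
          rw [← fract_coord aR t1 wX, ← hu1, ← hvX, fract_sub_Ico evX e1,
            if_neg (not_le.mpr (by linarith))]
        have q2 : Int.fract (t2' - wX) = u2' - vX + 1 := by
          rw [← fract_coord aR t2' wX, ← hu2', ← hvX, fract_sub_Ico evX eX,
            if_neg (not_le.mpr (by linarith))]
        rw [q1, q2]; linarith
      · by_contra hcon; push_neg at hcon
        apply hn3
        apply hb t3
        have q1 : Int.fract (t3 - wX) = u3 - vX + 1 := by
          rw [← fract_coord aR t3 wX, ← hu3, ← hvX, fract_sub_Ico evX e3,
            if_neg (not_le.mpr (by linarith))]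
        have q2 : Int.fract (t2' - wX) = u2' - vX + 1 := by
          rw [← fract_coord aR t2' wX, ← hu2', ← hvX, fract_sub_Ico evX eX,
            if_neg (not_le.mpr (by linarith))]
        rw [q1, q2]; linarith
  have s2 := mkside aS lS ws vs t2 u2 hu2 hm2 hvs hvs' h2S hwsS m1S m3S
  have s4 := mkside aT lT wt vt t4 u4 hu4 hm4 hvt hvt' h4T hwtT m1T m3T
  exact noAlt_sides e1 e2 e3 e4 c1' c2' s2 s4

end Stmt13

open Stmt13 in
/-- the augmented adjacency matrix of a proper circular-arc catch
digraph can be brought, by independent row and column permutations, to a matrix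
satisfying the three conditions. -/
theorem stmt_13 {V : Type*} [Fintype V] (E : V → V → Prop)
    (hirr : ∀ v, ¬ E v v)
    (h : IsProperCACatchDigraph E) :
    ∃ ρ γ : Fin (Fintype.card V) ≃ V, MatCond (AugM E ρ γ) := by
  classical
  obtain ⟨a, ℓ, p, hp, hprop, hE⟩ := h
  have hl0 : ∀ v, 0 ≤ ℓ v := fun v => le_trans (Int.fract_nonneg _) (hp v)
  let e : Fin (Fintype.card V) ≃ V := (Fintype.equivFin V).symm
  let γ : Fin (Fintype.card V) ≃ V :=
    (Tuple.sort (fun m => Int.fract (p (e m)))).trans e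
  let ρ : Fin (Fintype.card V) ≃ V :=
    (Tuple.sort (fun m => Int.fract (a (e m)))).trans e
  have hγ : Monotone (fun m => Int.fract (p (γ m))) :=
    Tuple.monotone_sort (fun m => Int.fract (p (e m)))
  have hρ : Monotone (fun m => Int.fract (a (ρ m))) :=
    Tuple.monotone_sort (fun m => Int.fract (a (e m)))
  have hfr : ∀ x c : ℝ, Int.fract (Int.fract x - c) = Int.fract (x - c) := by
    intro x c
    have h0 : Int.fract (Int.fract x - 0) = Int.fract (x - 0) := by
      rw [sub_zero, sub_zero, Int.fract_fract]
    exact same_point h0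
  have hBiff : ∀ u v : V, (E u v ∨ u = v) ↔ arcMem (a u) (ℓ u) (p v) := by
    intro u v
    constructor
    · rintro (he | rfl)
      · exact ((hE u v).mp he).2
      · exact hp u
    · intro hm
      by_cases huv : u = v
      · exact Or.inr huv
      · exact Or.inl ((hE u v).mpr ⟨huv, hm⟩)
  have hAug : ∀ i j : Fin (Fintype.card V),
      AugM E ρ γ i j ↔ arcMem (a (ρ i)) (ℓ (ρ i)) (Int.fract (p (γ j))) := by
    intro i j
    have h1 : arcMem (a (ρ i)) (ℓ (ρ i)) (Int.fract (p (γ j))) ↔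
        arcMem (a (ρ i)) (ℓ (ρ i)) (p (γ j)) := by
      unfold arcMem; rw [hfr]
    rw [h1]
    exact hBiff (ρ i) (γ j)
  refine ⟨ρ, γ, ?_, ?_, ?_, ?_⟩
  · -- condition 1: rows
    intro i
    have hset : {j | AugM E ρ γ i j} =
        {m | (fun t => arcMem (a (ρ i)) (ℓ (ρ i)) t) ((fun m => Int.fract (p (γ m))) m)} := by
      ext m
      simp only [Set.mem_setOf_eq]
      exact hAug i m
    rw [hset]
    refine circBlock_master hγ (fun m => fr_mem _) (fun t => arcMem (a (ρ i)) (ℓ (ρ i)) t) ?_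
    intro w x y z c1 c2 m1 m2 m3 m4
    exact noAlt_arc c1 c2 m1 m2 m3 m4
  · -- condition 2: columns
    intro j
    apply circBlock_of_noAlt
    intro r1 r2 r3 r4 hc h1 h2 h3 h4
    simp only [Set.mem_setOf_eq] at h1 h2 h3 h4
    rw [hAug] at h1 h3
    rw [hAug] at h2 h4
    rcases bridge hρ (fun m => fr_mem _) hc with heq | ⟨c1, c2⟩
    · have heq' : Int.fract (a (ρ r4)) = Int.fract (a (ρ r1)) := heq
      have hss := arcSet_eq (hprop (ρ r4) (ρ r1)) (hprop (ρ r1) (ρ r4)) heq'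
      apply h4
      have hmem : Int.fract (p (γ j)) ∈ arcSet (a (ρ r4)) (ℓ (ρ r4)) := by
        rw [hss]; exact h1
      exact hmem
    · -- chain case
      set x := Int.fract (p (γ j)) with hxdef
      have conv : ∀ rA rB : Fin (Fintype.card V),
          Int.fract (Int.fract (a (ρ rA) - x) - Int.fract (a (ρ rB) - x)) =
          Int.fract (Int.fract (a (ρ rA)) - Int.fract (a (ρ rB))) := by
        intro rA rB
        rw [fract_coord, fract_sub_fract]
      have c1' : Int.fract (Int.fract (a (ρ r2) - x) - Int.fract (a (ρ r1) - x)) ≤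
          Int.fract (Int.fract (a (ρ r3) - x) - Int.fract (a (ρ r1) - x)) := by
        rw [conv, conv]; exact c1
      have c2' : Int.fract (Int.fract (a (ρ r3) - x) - Int.fract (a (ρ r1) - x)) ≤
          Int.fract (Int.fract (a (ρ r4) - x) - Int.fract (a (ρ r1) - x)) := by
        rw [conv, conv]; exact c2
      have h2' := h2
      have h4' := h4
      rw [mem_iff_c (hl0 (ρ r2))] at h2'
      rw [mem_iff_c (hl0 (ρ r4))] at h4'
      push_neg at h2' h4'
      have hc2pos : 0 < Int.fract (a (ρ r2) - x) :=
        lt_of_le_of_ne (Int.fract_nonneg _) (Ne.symm h2'.1)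
      have hc4pos : 0 < Int.fract (a (ρ r4) - x) :=
        lt_of_le_of_ne (Int.fract_nonneg _) (Ne.symm h4'.1)
      have n12 : ¬ (0 < Int.fract (a (ρ r1) - x) ∧
          Int.fract (a (ρ r1) - x) ≤ Int.fract (a (ρ r2) - x)) :=
        fun hx2 => cont_contra (hprop (ρ r2) (ρ r1)) (hl0 _) (hl0 _) h1 h2 hx2.1 hx2.2
      have n14 : ¬ (0 < Int.fract (a (ρ r1) - x) ∧
          Int.fract (a (ρ r1) - x) ≤ Int.fract (a (ρ r4) - x)) :=
        fun hx2 => cont_contra (hprop (ρ r4) (ρ r1)) (hl0 _) (hl0 _) h1 h4 hx2.1 hx2.2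
      have n32 : ¬ (0 < Int.fract (a (ρ r3) - x) ∧
          Int.fract (a (ρ r3) - x) ≤ Int.fract (a (ρ r2) - x)) :=
        fun hx2 => cont_contra (hprop (ρ r2) (ρ r3)) (hl0 _) (hl0 _) h3 h2 hx2.1 hx2.2
      have n34 : ¬ (0 < Int.fract (a (ρ r3) - x) ∧
          Int.fract (a (ρ r3) - x) ≤ Int.fract (a (ρ r4) - x)) :=
        fun hx2 => cont_contra (hprop (ρ r4) (ρ r3)) (hl0 _) (hl0 _) h3 h4 hx2.1 hx2.2
      exact cond2_arith (fr_mem _) (fr_mem _) (fr_mem _) (fr_mem _)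
        c1' c2' hc2pos hc4pos n12 n14 n32 n34
  · -- condition 3: row differences
    intro r s
    have hset : {j | AugM E ρ γ r j ∧ ¬ AugM E ρ γ s j} =
        {m | (fun t => arcMem (a (ρ r)) (ℓ (ρ r)) t ∧ ¬ arcMem (a (ρ s)) (ℓ (ρ s)) t)
          ((fun m => Int.fract (p (γ m))) m)} := by
      ext m
      simp only [Set.mem_setOf_eq]
      rw [hAug, hAug]
    rw [hset]
    refine circBlock_master hγ (fun m => fr_mem _)
      (fun t => arcMem (a (ρ r)) (ℓ (ρ r)) t ∧ ¬ arcMem (a (ρ s)) (ℓ (ρ s)) t) ?_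
    intro w x y z c1 c2 m1 m2 m3 m4
    have m1' : arcMem (a (ρ r)) (ℓ (ρ r)) (Int.fract (p (γ w))) ∧
        ¬ arcMem (a (ρ s)) (ℓ (ρ s)) (Int.fract (p (γ w))) := m1
    have m3' : arcMem (a (ρ r)) (ℓ (ρ r)) (Int.fract (p (γ y))) ∧
        ¬ arcMem (a (ρ s)) (ℓ (ρ s)) (Int.fract (p (γ y))) := m3
    have m2' : ¬ (arcMem (a (ρ r)) (ℓ (ρ r)) (Int.fract (p (γ x))) ∧
        ¬ arcMem (a (ρ s)) (ℓ (ρ s)) (Int.fract (p (γ x)))) := m2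
    have m4' : ¬ (arcMem (a (ρ r)) (ℓ (ρ r)) (Int.fract (p (γ z))) ∧
        ¬ arcMem (a (ρ s)) (ℓ (ρ s)) (Int.fract (p (γ z)))) := m4
    push_neg at m2' m4'
    by_cases h2A : arcMem (a (ρ r)) (ℓ (ρ r)) (Int.fract (p (γ x))) <;>
      by_cases h4A : arcMem (a (ρ r)) (ℓ (ρ r)) (Int.fract (p (γ z)))
    · exact noAlt_arc' c1 c2 m1'.2 (m2' h2A) m3'.2 (m4' h4A)
    · exact hprop (ρ s) (ρ r)
        (mixed2 (fr_mem _) (fr_mem _) (fr_mem _) (fr_mem _) c1 c2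
          m1'.1 m1'.2 h2A (m2' h2A) m3'.1 m3'.2 h4A)
    · exact hprop (ρ s) (ρ r)
        (mixed1 (fr_mem _) (fr_mem _) (fr_mem _) (fr_mem _) c1 c2
          m1'.1 m1'.2 h2A m3'.1 m3'.2 h4A (m4' h4A))
    · exact noAlt_arc c1 c2 m1'.1 h2A m3'.1 h4A
  · -- condition 4
    intro r s u hfull hs1 hs0 hu1 hu0
    have hFull : ∀ m : Fin (Fintype.card V),
        arcMem (a (ρ r)) (ℓ (ρ r)) (Int.fract (p (γ m))) := by
      intro m
      have := hfull m
      rwa [hAug] at this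
    -- witness for s
    obtain ⟨js, hjs⟩ := hs0
    have hsne : arcSet (a (ρ s)) (ℓ (ρ s)) ≠ arcSet (a (ρ r)) (ℓ (ρ r)) := by
      intro hEq
      apply hjs
      rw [hAug]
      have hxr : Int.fract (p (γ js)) ∈ arcSet (a (ρ r)) (ℓ (ρ r)) := hFull js
      rw [← hEq] at hxr
      exact hxr
    obtain ⟨ws, hwsS, hwsR⟩ : ∃ w, w ∈ arcSet (a (ρ s)) (ℓ (ρ s)) ∧
        w ∉ arcSet (a (ρ r)) (ℓ (ρ r)) := by
      have hnsub : ¬ arcSet (a (ρ s)) (ℓ (ρ s)) ⊆ arcSet (a (ρ r)) (ℓ (ρ r)) :=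
        fun hsub => hprop (ρ s) (ρ r) (Set.ssubset_iff_subset_ne.mpr ⟨hsub, hsne⟩)
      exact Set.not_subset.mp hnsub
    obtain ⟨ju, hju⟩ := hu0
    have hune : arcSet (a (ρ u)) (ℓ (ρ u)) ≠ arcSet (a (ρ r)) (ℓ (ρ r)) := by
      intro hEq
      apply hju
      rw [hAug]
      have hxr : Int.fract (p (γ ju)) ∈ arcSet (a (ρ r)) (ℓ (ρ r)) := hFull ju
      rw [← hEq] at hxr
      exact hxr
    obtain ⟨wt, hwtT, hwtR⟩ : ∃ w, w ∈ arcSet (a (ρ u)) (ℓ (ρ u)) ∧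
        w ∉ arcSet (a (ρ r)) (ℓ (ρ r)) := by
      have hnsub : ¬ arcSet (a (ρ u)) (ℓ (ρ u)) ⊆ arcSet (a (ρ r)) (ℓ (ρ r)) :=
        fun hsub => hprop (ρ u) (ρ r) (Set.ssubset_iff_subset_ne.mpr ⟨hsub, hune⟩)
      exact Set.not_subset.mp hnsub
    have hset : {j | AugM E ρ γ r j ∧ ¬ AugM E ρ γ s j ∧ ¬ AugM E ρ γ u j} =
        {m | (fun t => arcMem (a (ρ r)) (ℓ (ρ r)) t ∧ ¬ arcMem (a (ρ s)) (ℓ (ρ s)) t ∧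
          ¬ arcMem (a (ρ u)) (ℓ (ρ u)) t) ((fun m => Int.fract (p (γ m))) m)} := by
      ext m
      simp only [Set.mem_setOf_eq]
      rw [hAug, hAug, hAug]
    rw [hset]
    refine circBlock_master hγ (fun m => fr_mem _)
      (fun t => arcMem (a (ρ r)) (ℓ (ρ r)) t ∧ ¬ arcMem (a (ρ s)) (ℓ (ρ s)) t ∧
        ¬ arcMem (a (ρ u)) (ℓ (ρ u)) t) ?_
    intro w x y z c1 c2 m1 m2 m3 m4
    have m1' : arcMem (a (ρ r)) (ℓ (ρ r)) (Int.fract (p (γ w))) ∧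
        ¬ arcMem (a (ρ s)) (ℓ (ρ s)) (Int.fract (p (γ w))) ∧
        ¬ arcMem (a (ρ u)) (ℓ (ρ u)) (Int.fract (p (γ w))) := m1
    have m3' : arcMem (a (ρ r)) (ℓ (ρ r)) (Int.fract (p (γ y))) ∧
        ¬ arcMem (a (ρ s)) (ℓ (ρ s)) (Int.fract (p (γ y))) ∧
        ¬ arcMem (a (ρ u)) (ℓ (ρ u)) (Int.fract (p (γ y))) := m3
    have m2' : ¬ (arcMem (a (ρ r)) (ℓ (ρ r)) (Int.fract (p (γ x))) ∧
        ¬ arcMem (a (ρ s)) (ℓ (ρ s)) (Int.fract (p (γ x))) ∧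
        ¬ arcMem (a (ρ u)) (ℓ (ρ u)) (Int.fract (p (γ x)))) := m2
    have m4' : ¬ (arcMem (a (ρ r)) (ℓ (ρ r)) (Int.fract (p (γ z))) ∧
        ¬ arcMem (a (ρ s)) (ℓ (ρ s)) (Int.fract (p (γ z))) ∧
        ¬ arcMem (a (ρ u)) (ℓ (ρ u)) (Int.fract (p (γ z)))) := m4
    have h2ST : arcMem (a (ρ s)) (ℓ (ρ s)) (Int.fract (p (γ x))) ∨
        arcMem (a (ρ u)) (ℓ (ρ u)) (Int.fract (p (γ x))) := by
      by_contra hcc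
      push_neg at hcc
      exact m2' ⟨hFull x, hcc.1, hcc.2⟩
    have h4ST : arcMem (a (ρ s)) (ℓ (ρ s)) (Int.fract (p (γ z))) ∨
        arcMem (a (ρ u)) (ℓ (ρ u)) (Int.fract (p (γ z))) := by
      by_contra hcc
      push_neg at hcc
      exact m4' ⟨hFull z, hcc.1, hcc.2⟩
    rcases h2ST with h2S | h2T <;> rcases h4ST with h4S | h4T
    · exact noAlt_arc' c1 c2 m1'.2.1 h2S m3'.2.1 h4S
    · exact mixed4 (fr_mem _) (fr_mem _) (fr_mem _) (fr_mem _) c1 c2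
        m1'.1 (hFull x) m3'.1 (hFull z)
        m1'.2.1 m3'.2.1 m1'.2.2 m3'.2.2 h2S h4T hwsS hwsR hwtT hwtR
    · exact mixed4 (fr_mem _) (fr_mem _) (fr_mem _) (fr_mem _) c1 c2
        m1'.1 (hFull x) m3'.1 (hFull z)
        m1'.2.2 m3'.2.2 m1'.2.1 m3'.2.1 h2T h4S hwtT hwtR hwsS hwsR
    · exact noAlt_arc' c1 c2 m1'.2.2 h2T m3'.2.2 h4T
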